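/- Let U ⊆ ℂ be open, let a, b, c, d ∈ ℂ with a·d − b·c = 1 and â, b̂, ĉ, d̂ ∈ ℂ with â·d̂ − b̂·ĉ = 1, and set γ(z) = (a·z+b)/(c·z+d), ρ(w) = (â·w+b̂)/(ĉ·w+d̂). Let f, g, h : ℂ → ℂ be analytic on U such that for all z ∈ U with c·z+d ≠ 0: γ(z) ∈ U, ĉ·f(z)+d̂ ≠ 0 and f(γ(z)) = ρ(f(z)), g(γ(z)) = g(z), and h(γ(z)) = h(z). Define ḟ(z) = f'(z)/g'(z), f̈(z) = (ḟ)'(z)/g'(z), and F(z) = f(z) + ḟ(z)/(h(z) − f̈(z)/(2·ḟ(z))). Then for every z ∈ U such that c·z+d ≠ 0, g'(z) ≠ 0, g'(γ(z)) ≠ 0, ḟ ≠ 0 and h − f̈/(2ḟ) ≠ 0 at both z and γ(z), and ĉ·F(z)+d̂ ≠ 0, one has F(γ(z)) = (â·F(z)+b̂)/(ĉ·F(z)+d̂). -/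

import Mathlib

lemma moebius_hasDerivAt (a b c d z : ℂ) (hz : c * z + d ≠ 0) :
    HasDerivAt (fun w => (a * w + b) / (c * w + d)) ((a * d - b * c) / (c * z + d) ^ 2) z := by
  have h1 : HasDerivAt (fun w : ℂ => a * w + b) a z := by
    simpa using ((hasDerivAt_id z).const_mul a).add_const b
  have h2 : HasDerivAt (fun w : ℂ => c * w + d) c z := by
    simpa using ((hasDerivAt_id z).const_mul c).add_const d
  have := h1.div h2 hz
  refine this.congr_deriv ?_
  ring

lemma moebius_key (ah bh ch dh : ℂ) (hdet' : ah * dh - bh * ch = 1)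
    (w p D : ℂ) (hJ : (ch * w + dh) ≠ 0) (hD : D ≠ 0)
    (h1 : D + ch * p / (ch * w + dh) ≠ 0)
    (h2 : ch * (w + p / D) + dh ≠ 0) :
      (ah * w + bh) / (ch * w + dh) + p / (ch * w + dh) ^ 2 / (D + ch * p / (ch * w + dh))
        = (ah * (w + p / D) + bh) / (ch * (w + p / D) + dh) := by
  have h3 : D * (ch * w + dh) + ch * p ≠ 0 := by
    intro h0
    apply h1
    field_simp
    linear_combination h0
  have h4 : ch * (w * D + p) + dh * D ≠ 0 := by
    intro h0
    apply h2
    field_simp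
    linear_combination h0
  have hJ' : w * ch + dh ≠ 0 := by rwa [mul_comm w]
  have h1' : D + ch * p / (w * ch + dh) ≠ 0 := by rwa [mul_comm w]
  have h3' : (w * ch + dh) * D + ch * p ≠ 0 := by rw [mul_comm, mul_comm w]; exact h3
  field_simp
  linear_combination (-((w * ch + dh) * D + ch * p) * p) * hdet'

theorem equivariant_of_invariant
    (U : Set ℂ) (hU : IsOpen U)
    (a b c d ah bh ch dh : ℂ)
    (hdet : a * d - b * c = 1) (hdet' : ah * dh - bh * ch = 1)
    (γ ρ : ℂ → ℂ)
    (hγ : γ = fun z => (a * z + b) / (c * z + d))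
    (hρ : ρ = fun w => (ah * w + bh) / (ch * w + dh))
    (f g h : ℂ → ℂ)
    (hf : AnalyticOnNhd ℂ f U) (hg : AnalyticOnNhd ℂ g U) (hh : AnalyticOnNhd ℂ h U)
    (hmaps : ∀ z ∈ U, c * z + d ≠ 0 → γ z ∈ U)
    (hfden : ∀ z ∈ U, c * z + d ≠ 0 → ch * f z + dh ≠ 0)
    (hfe : ∀ z ∈ U, c * z + d ≠ 0 → f (γ z) = ρ (f z))
    (hgi : ∀ z ∈ U, c * z + d ≠ 0 → g (γ z) = g z)
    (hhi : ∀ z ∈ U, c * z + d ≠ 0 → h (γ z) = h z)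
    (fd fdd F : ℂ → ℂ)
    (hfd : ∀ z, fd z = deriv f z / deriv g z)
    (hfdd : ∀ z, fdd z = deriv fd z / deriv g z)
    (hF : ∀ z, F z = f z + fd z / (h z - fdd z / (2 * fd z))) :
    ∀ z ∈ U, c * z + d ≠ 0 → deriv g z ≠ 0 → deriv g (γ z) ≠ 0 →
      fd z ≠ 0 → fd (γ z) ≠ 0 →
      h z - fdd z / (2 * fd z) ≠ 0 → h (γ z) - fdd (γ z) / (2 * fd (γ z)) ≠ 0 →
      ch * F z + dh ≠ 0 →
      F (γ z) = (ah * F z + bh) / (ch * F z + dh) := by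
  set V : Set ℂ := U ∩ {z | c * z + d ≠ 0} with hV
  have hVopen : IsOpen V := by
    apply hU.inter
    have hc : Continuous fun z : ℂ => c * z + d := by continuity
    exact isOpen_compl_singleton.preimage hc
  have hdγ : ∀ z ∈ V, HasDerivAt γ (1 / (c * z + d) ^ 2) z := by
    intro z hz
    have := moebius_hasDerivAt a b c d z hz.2
    rw [hdet] at this
    rwa [hγ]
  have gstep : ∀ z ∈ V, deriv g (γ z) = deriv g z * (c * z + d) ^ 2 := by
    intro z hz
    have hγzU : γ z ∈ U := hmaps z hz.1 hz.2
    have hcomp : HasDerivAt (g ∘ γ) (deriv g (γ z) * (1 / (c * z + d) ^ 2)) z :=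
      ((hg _ hγzU).differentiableAt.hasDerivAt).comp z (hdγ z hz)
    have heq : (g ∘ γ) =ᶠ[nhds z] g := by
      filter_upwards [hVopen.mem_nhds hz] with w hw using hgi w hw.1 hw.2
    have hthis := heq.deriv_eq
    rw [hcomp.deriv] at hthis
    have hj : (c * z + d) ^ 2 ≠ 0 := pow_ne_zero 2 hz.2
    have hz2 : c * z + d ≠ 0 := hz.2
    field_simp at hthis
    linear_combination hthis
  have fstep : ∀ z ∈ V, deriv f (γ z) * (ch * f z + dh) ^ 2 = deriv f z * (c * z + d) ^ 2 := by
    intro z hz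
    have hγzU : γ z ∈ U := hmaps z hz.1 hz.2
    have hJ : ch * f z + dh ≠ 0 := hfden z hz.1 hz.2
    have hcomp : HasDerivAt (f ∘ γ) (deriv f (γ z) * (1 / (c * z + d) ^ 2)) z :=
      ((hf _ hγzU).differentiableAt.hasDerivAt).comp z (hdγ z hz)
    have hρd : HasDerivAt ρ (1 / (ch * f z + dh) ^ 2) (f z) := by
      have := moebius_hasDerivAt ah bh ch dh (f z) hJ
      rw [hdet'] at this
      rwa [hρ]
    have hcomp2 : HasDerivAt (ρ ∘ f) (1 / (ch * f z + dh) ^ 2 * deriv f z) z :=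
      hρd.comp z (hf _ hz.1).differentiableAt.hasDerivAt
    have heq : (f ∘ γ) =ᶠ[nhds z] (ρ ∘ f) := by
      filter_upwards [hVopen.mem_nhds hz] with w hw using hfe w hw.1 hw.2
    have hthis := heq.deriv_eq
    rw [hcomp.deriv, hcomp2.deriv] at hthis
    have hj : (c * z + d) ^ 2 ≠ 0 := pow_ne_zero 2 hz.2
    have hJ2 : (ch * f z + dh) ^ 2 ≠ 0 := pow_ne_zero 2 hJ
    have hz2 : c * z + d ≠ 0 := hz.2
    field_simp at hthis
    linear_combination hthis
  have fdstep : ∀ z ∈ V, fd (γ z) = fd z / (ch * f z + dh) ^ 2 := by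
    intro z hz
    have hJ2 : (ch * f z + dh) ^ 2 ≠ 0 := pow_ne_zero 2 (hfden z hz.1 hz.2)
    have hj2 : (c * z + d) ^ 2 ≠ 0 := pow_ne_zero 2 hz.2
    rw [hfd, hfd, gstep z hz]
    rcases eq_or_ne (deriv g z) 0 with h0 | h0
    · simp [h0]
    · have hfγ : deriv f (γ z) = deriv f z * (c * z + d) ^ 2 / (ch * f z + dh) ^ 2 := by
        have hs := fstep z hz
        have hJ1 : ch * f z + dh ≠ 0 := hfden z hz.1 hz.2
        field_simp
        linear_combination hs
      rw [hfγ]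
      have hJ1 : ch * f z + dh ≠ 0 := hfden z hz.1 hz.2
      have hz2 : c * z + d ≠ 0 := hz.2
      field_simp
  intro z hzU hjz hg1 hg1γ hfd0 hfdγ0 hD hDγ hJF
  have hzV : z ∈ V := ⟨hzU, hjz⟩
  have hγzU : γ z ∈ U := hmaps z hzU hjz
  have hJ : ch * f z + dh ≠ 0 := hfden z hzU hjz
  have hJ2 : (ch * f z + dh) ^ 2 ≠ 0 := pow_ne_zero 2 hJ
  have hJ3 : (ch * f z + dh) ^ 3 ≠ 0 := pow_ne_zero 3 hJ
  have hJ4 : (ch * f z + dh) ^ 4 ≠ 0 := pow_ne_zero 4 hJ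
  have hj2 : (c * z + d) ^ 2 ≠ 0 := pow_ne_zero 2 hjz
  have hfdfun : fd = fun w => deriv f w / deriv g w := funext hfd
  have hfdAt : DifferentiableAt ℂ fd z := by
    rw [hfdfun]
    exact ((hf.deriv z hzU).div (hg.deriv z hzU) hg1).differentiableAt
  have hfdAtγ : DifferentiableAt ℂ fd (γ z) := by
    rw [hfdfun]
    exact ((hf.deriv _ hγzU).div (hg.deriv _ hγzU) hg1γ).differentiableAt
  have hJd : HasDerivAt (fun w => (ch * f w + dh) ^ 2)
      (2 * (ch * f z + dh) ^ 1 * (ch * deriv f z)) z := by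
    have h1 : HasDerivAt (fun w => ch * f w + dh) (ch * deriv f z) z :=
      (((hf z hzU).differentiableAt.hasDerivAt).const_mul ch).add_const dh
    exact h1.pow 2
  have hq : HasDerivAt (fun w => fd w / (ch * f w + dh) ^ 2)
      ((deriv fd z * (ch * f z + dh) ^ 2 - fd z * (2 * (ch * f z + dh) ^ 1 * (ch * deriv f z)))
        / ((ch * f z + dh) ^ 2) ^ 2) z :=
    hfdAt.hasDerivAt.div hJd hJ2
  have hp : HasDerivAt (fd ∘ γ) (deriv fd (γ z) * (1 / (c * z + d) ^ 2)) z :=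
    (hfdAtγ.hasDerivAt).comp z (hdγ z hzV)
  have heq : (fd ∘ γ) =ᶠ[nhds z] (fun w => fd w / (ch * f w + dh) ^ 2) := by
    filter_upwards [hVopen.mem_nhds hzV] with w hw using fdstep w hw
  have hder := heq.deriv_eq
  rw [hp.deriv, hq.deriv] at hder
  have hf1 : deriv f z = fd z * deriv g z := by
    rw [hfd]
    field_simp
  rw [hf1] at hder
  have e1 : deriv fd (γ z) = (c * z + d) ^ 2 *
      (deriv fd z * (ch * f z + dh) ^ 2
        - 2 * (fd z) ^ 2 * deriv g z * ch * (ch * f z + dh)) / (ch * f z + dh) ^ 4 := by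
    rw [eq_div_iff hJ4]
    field_simp at hder
    linear_combination (ch * f z + dh) * hder
  have Efdd : fdd (γ z)
      = fdd z / (ch * f z + dh) ^ 2 - 2 * ch * (fd z) ^ 2 / (ch * f z + dh) ^ 3 := by
    rw [hfdd, hfdd, gstep z hzV, e1]
    field_simp
  have Ef : f (γ z) = (ah * f z + bh) / (ch * f z + dh) := by
    rw [hfe z hzU hjz, hρ]
  have Eh : h (γ z) = h z := hhi z hzU hjz
  have Efd : fd (γ z) = fd z / (ch * f z + dh) ^ 2 := fdstep z hzV
  have hDγeq : h (γ z) - fdd (γ z) / (2 * fd (γ z))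
      = (h z - fdd z / (2 * fd z)) + ch * fd z / (ch * f z + dh) := by
    rw [Eh, Efd, Efdd]
    field_simp
    ring
  rw [hDγeq] at hDγ
  rw [hF z] at hJF
  rw [hF (γ z), hDγeq, Ef, Efd, hF z]
  exact moebius_key ah bh ch dh hdet' (f z) (fd z) (h z - fdd z / (2 * fd z)) hJ hD hDγ hJF
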